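/- Let F ⊆ G ⊆ D be subspaces of a finite-dimensional E-vector space D, with a := dim F ≥ 1. Then the image of the canonical map (∧^{a−1}F) ⊗ G → ∧^a D (sending x ⊗ g to x ∧ g) has dimension 1 + a·(dim G − a). -/

import Mathlib

open ExteriorAlgebra Pointwise

section Aux

variable {E : Type*} [Field E] {D : Type*} [AddCommGroup D] [Module E D]

/-- A linearly independent family over a field admits a dual family of functionals. -/
lemma st4_exists_dual {κ : Type*} {v : κ → D} (hv : LinearIndependent E v) :
    ∃ φ : κ → (D →ₗ[E] E), (∀ k, φ k (v k) = 1) ∧ ∀ k l, k ≠ l → φ k (v l) = 0 := by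
  classical
  have hs := (linearIndepOn_id_range_iff hv.injective).mpr hv
  have hmem : ∀ k, v k ∈ hs.extend (Set.subset_univ _) := fun k =>
    Module.Basis.subset_extend hs ⟨k, rfl⟩
  have key : ∀ k l, (Module.Basis.extend hs).coord ⟨v k, hmem k⟩ (v l) =
      if (⟨v l, hmem l⟩ : hs.extend (Set.subset_univ _)) = ⟨v k, hmem k⟩ then 1 else 0 := by
    intro k l
    have hval : v l = Module.Basis.extend hs ⟨v l, hmem l⟩ :=
      (Module.Basis.extend_apply_self hs ⟨v l, hmem l⟩).symm
    rw [Module.Basis.coord_apply]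
    conv_lhs => rw [hval]
    rw [Module.Basis.repr_self, Finsupp.single_apply]
  refine ⟨fun k => (Module.Basis.extend hs).coord ⟨v k, hmem k⟩, fun k => ?_, fun k l h => ?_⟩
  · rw [key]; simp
  · rw [key]
    have : v l ≠ v k := fun he => h (hv.injective he).symm
    rw [if_neg (by simpa [Subtype.ext_iff] using this)]

/-- Two injective families with the same range have wedges equal up to sign. -/
lemma st4_wedge_mem_span_singleton {k : ℕ} {u w : Fin k → D} (hu : Function.Injective u)
    (hw : Function.Injective w) (hr : Set.range u = Set.range w) :
    ιMulti E k u ∈ Submodule.span E {ιMulti E k w} := by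
  classical
  let e1 := Equiv.ofInjective u hu
  let e2 := Equiv.ofInjective w hw
  let σ : Equiv.Perm (Fin k) := (e1.trans (Equiv.setCongr hr)).trans e2.symm
  have hcomp : w ∘ σ = u := by
    funext x
    have h2 : ∀ z : Set.range w, w (e2.symm z) = z := fun z =>
      congrArg Subtype.val (e2.apply_symm_apply z)
    exact h2 (Equiv.setCongr hr (e1 x))
  have := (ιMulti E k (M := D)).map_perm w σ
  rw [hcomp] at this
  rw [this]
  rcases Int.units_eq_one_or (Equiv.Perm.sign σ) with h | h <;> rw [h]
  · simpa using Submodule.mem_span_singleton_self _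
  · have : ((-1 : ℤˣ) • ιMulti E k w) = -(ιMulti E k w) := by simp
    rw [this]
    exact Submodule.neg_mem _ (Submodule.mem_span_singleton_self _)

lemma st4_snoc_injective {α : Type*} {k : ℕ} {p : Fin k → α} {q : α} (hp : Function.Injective p)
    (hq : q ∉ Set.range p) : Function.Injective (Fin.snoc p q : Fin (k+1) → α) := by
  intro x y h
  induction x using Fin.lastCases with
  | last =>
    induction y using Fin.lastCases with
    | last => rfl
    | cast y =>
      rw [Fin.snoc_last, Fin.snoc_castSucc] at h
      exact absurd ⟨y, h.symm⟩ hq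
  | cast x =>
    induction y using Fin.lastCases with
    | last =>
      rw [Fin.snoc_last, Fin.snoc_castSucc] at h
      exact absurd ⟨x, h⟩ hq
    | cast y =>
      rw [Fin.snoc_castSucc, Fin.snoc_castSucc] at h
      exact congrArg Fin.castSucc (hp h)

lemma st4_range_snoc {α : Type*} {k : ℕ} (p : Fin k → α) (q : α) :
    Set.range (Fin.snoc p q : Fin (k+1) → α) = Set.range p ∪ {q} := by
  ext z
  constructor
  · rintro ⟨r, rfl⟩
    induction r using Fin.lastCases with
    | last => right; simp
    | cast r => left; exact ⟨r, by simp⟩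
  · rintro (⟨r, rfl⟩ | rfl)
    · exact ⟨r.castSucc, by simp⟩
    · exact ⟨Fin.last k, by simp⟩

lemma st4_prod_snoc {k : ℕ} (p : Fin k → D) (q : D) :
    ιMulti E (k+1) (Fin.snoc p q) = (List.ofFn fun i => ι E (p i)).prod * ι E q := by
  rw [ιMulti_apply, List.ofFn_succ' (fun i => ι E (Fin.snoc p q i)), List.concat_eq_append,
    List.prod_append]
  simp

end Aux
/-- Let `F ⊆ G ⊆ D` be subspaces of a finite-dimensional `E`-vector space `D`,
with `a := dim F ≥ 1`.  Then the image of the canonical map `(⋀^{a-1} F) ⊗ G → ⋀^a D`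
(sending `x ⊗ g` to `x ∧ g`) has dimension `1 + a (dim G - a)`.

The image is realized inside the exterior algebra of `D` as the submodule product
`ι(F)^{a-1} * ι(G)`. -/
theorem statement4 {E : Type*} [Field E] {D : Type*} [AddCommGroup D] [Module E D]
    [FiniteDimensional E D] {a : ℕ}
    (F G : Submodule E D) (hFG : F ≤ G) (hF : Module.finrank E F = a) (ha : 1 ≤ a) :
    Module.finrank E
      ((Submodule.map (ExteriorAlgebra.ι E) F) ^ (a - 1) *
        (Submodule.map (ExteriorAlgebra.ι E) G)) =
      1 + a * (Module.finrank E G - a) := by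
  classical
  obtain ⟨a', rfl⟩ : ∃ a', a = a' + 1 := ⟨a - 1, (Nat.succ_pred_eq_of_pos ha).symm⟩
  -- a complement `C` of `F` inside `G`
  obtain ⟨K, hK⟩ := Submodule.exists_isCompl (F.comap G.subtype)
  have hFmap : (F.comap G.subtype).map G.subtype = F := by
    rw [Submodule.map_comap_subtype]; exact inf_eq_right.mpr hFG
  set C : Submodule E D := K.map G.subtype with hCdef
  have hsup : F ⊔ C = G := by
    rw [← hFmap, hCdef, ← Submodule.map_sup, hK.sup_eq_top, Submodule.map_top,
      Submodule.range_subtype]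
  have hinf : F ⊓ C = ⊥ := by
    rw [← hFmap, hCdef, ← Submodule.map_inf _ (Submodule.injective_subtype G),
      hK.inf_eq_bot, Submodule.map_bot]
  set m := Module.finrank E C with hm
  have hg : Module.finrank E G = (a' + 1) + m := by
    have h2 := Submodule.finrank_sup_add_finrank_inf_eq F C
    rw [hinf, hsup, hF] at h2
    rw [hm]
    simpa using h2
  -- bases of `F` and `C`, viewed as families in `D`
  let bF := Module.finBasisOfFinrankEq E F hF
  let f : Fin (a' + 1) → D := fun i => (bF i : D)
  have hfli : LinearIndependent E f :=
    bF.linearIndependent.map' F.subtype (Submodule.ker_subtype F)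
  have hfspan : Submodule.span E (Set.range f) = F := by
    have h : Set.range f = F.subtype '' Set.range bF := by rw [← Set.range_comp]; rfl
    rw [h, ← Submodule.map_span, bF.span_eq, Submodule.map_top, Submodule.range_subtype]
  let bC := Module.finBasisOfFinrankEq E C hm.symm
  let c : Fin m → D := fun j => (bC j : D)
  have hcli : LinearIndependent E c :=
    bC.linearIndependent.map' C.subtype (Submodule.ker_subtype C)
  have hcspan : Submodule.span E (Set.range c) = C := by
    have h : Set.range c = C.subtype '' Set.range bC := by rw [← Set.range_comp]; rfl
    rw [h, ← Submodule.map_span, bC.span_eq, Submodule.map_top, Submodule.range_subtype]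
  let v : Fin (a' + 1) ⊕ Fin m → D := Sum.elim f c
  have hvli : LinearIndependent E v :=
    hfli.sum_type hcli (by rw [hfspan, hcspan]; exact disjoint_iff.mpr hinf)
  have hfinj : Function.Injective f := hfli.injective
  have hvinj : Function.Injective v := hvli.injective
  have hcf : ∀ j, c j ∉ Set.range f := by
    rintro j ⟨x, hx⟩
    exact Sum.inl_ne_inr (hvinj (show v (Sum.inl x) = v (Sum.inr j) from hx))
  -- the index families for the generators
  let col : Option (Fin (a' + 1) × Fin m) → Fin (a' + 1) → (Fin (a' + 1) ⊕ Fin m) := fun x =>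
    match x with
    | none => Sum.inl
    | some (i, j) => Fin.snoc (fun k => Sum.inl (i.succAbove k)) (Sum.inr j)
  let gen : Option (Fin (a' + 1) × Fin m) → ExteriorAlgebra E D := fun x =>
    ExteriorAlgebra.ιMulti E (a' + 1) (v ∘ col x)
  have hcol_none : v ∘ col none = f := rfl
  have hcol_some : ∀ i j, v ∘ col (some (i, j)) = Fin.snoc (f ∘ i.succAbove) (c j) := by
    intro i j
    show v ∘ Fin.snoc (fun k => Sum.inl (i.succAbove k)) (Sum.inr j) = _
    rw [Fin.comp_snoc]
    rfl
  have hcolinj : ∀ x, Function.Injective (col x) := by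
    rintro (_ | ⟨i, j⟩)
    · exact Sum.inl_injective
    · exact st4_snoc_injective
        (fun s t h => Fin.succAbove_right_injective (Sum.inl_injective h))
        (by rintro ⟨t, ht⟩; exact Sum.inl_ne_inr ht)
  have hwitness : ∀ x y, x ≠ y → ∃ r, ∀ k, col x k ≠ col y r := by
    rintro (_ | ⟨i, j⟩) (_ | ⟨i', j'⟩) hxy
    · exact absurd rfl hxy
    · -- x = none, y = some (i', j') : take the last row
      refine ⟨Fin.last a', fun k => ?_⟩
      show Sum.inl k ≠ col (some (i', j')) (Fin.last a')
      have : col (some (i', j')) (Fin.last a') = Sum.inr j' := Fin.snoc_last _ _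
      rw [this]
      exact fun h => Sum.inl_ne_inr h
    · -- x = some (i, j), y = none : take row i
      refine ⟨i, fun k => ?_⟩
      show col (some (i, j)) k ≠ Sum.inl i
      induction k using Fin.lastCases with
      | last =>
        have : col (some (i, j)) (Fin.last a') = Sum.inr j := Fin.snoc_last _ _
        rw [this]; exact fun h => Sum.inr_ne_inl h
      | cast k =>
        have : col (some (i, j)) k.castSucc = Sum.inl (i.succAbove k) := Fin.snoc_castSucc _ _ _
        rw [this]
        intro h
        exact Fin.succAbove_ne i k (Sum.inl_injective h)
    · -- both some
      by_cases hj : j = j'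
      · subst hj
        have hi : i ≠ i' := fun h => hxy (by rw [h])
        obtain ⟨z, hz⟩ := Fin.exists_succAbove_eq hi
        refine ⟨z.castSucc, fun k => ?_⟩
        have hy : col (some (i', j)) z.castSucc = Sum.inl (i'.succAbove z) :=
          Fin.snoc_castSucc _ _ _
        rw [hy, hz]
        induction k using Fin.lastCases with
        | last =>
          have : col (some (i, j)) (Fin.last a') = Sum.inr j := Fin.snoc_last _ _
          rw [this]; exact fun h => Sum.inr_ne_inl h
        | cast k =>
          have : col (some (i, j)) k.castSucc = Sum.inl (i.succAbove k) := Fin.snoc_castSucc _ _ _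
          rw [this]
          intro h
          exact Fin.succAbove_ne i k (Sum.inl_injective h)
      · refine ⟨Fin.last a', fun k => ?_⟩
        have hy : col (some (i', j')) (Fin.last a') = Sum.inr j' := Fin.snoc_last _ _
        rw [hy]
        induction k using Fin.lastCases with
        | last =>
          have : col (some (i, j)) (Fin.last a') = Sum.inr j := Fin.snoc_last _ _
          rw [this]
          exact fun h => hj (Sum.inr_injective h)
        | cast k =>
          have : col (some (i, j)) k.castSucc = Sum.inl (i.succAbove k) := Fin.snoc_castSucc _ _ _
          rw [this]
          exact fun h => Sum.inl_ne_inr h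
  -- dual functionals
  obtain ⟨φ, hφ1, hφ0⟩ := st4_exists_dual hvli
  let A : Option (Fin (a' + 1) × Fin m) → (D [⋀^Fin (a' + 1)]→ₗ[E] E) := fun x =>
    (Matrix.detRowAlternating).compLinearMap (LinearMap.pi fun k => φ (col x k))
  let Φ : Option (Fin (a' + 1) × Fin m) → (ExteriorAlgebra E D →ₗ[E] E) := fun x =>
    ExteriorAlgebra.liftAlternating
      (fun i => if h : i = a' + 1 then cast (by rw [h]) (A x) else 0)
  have hΦ : ∀ x y, Φ x (gen y) = if x = y then 1 else 0 := by
    intro x y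
    have h1 : Φ x (gen y) = A x (v ∘ col y) := by
      show ExteriorAlgebra.liftAlternating _ (ExteriorAlgebra.ιMulti E (a' + 1) (v ∘ col y)) = _
      rw [ExteriorAlgebra.liftAlternating_apply_ιMulti, dif_pos rfl, cast_eq]
    have h2 : A x (v ∘ col y) =
        Matrix.det (Matrix.of fun r k => φ (col x k) (v (col y r))) := by
      show (Matrix.detRowAlternating.compLinearMap (LinearMap.pi fun k => φ (col x k)))
        (v ∘ col y) = _
      rw [AlternatingMap.compLinearMap_apply]
      rfl
    rw [h1, h2]
    by_cases hxy : x = y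
    · subst hxy
      rw [if_pos rfl]
      have hone : (Matrix.of fun r k => φ (col x k) (v (col x r))) = 1 := by
        ext r k
        rw [Matrix.of_apply, Matrix.one_apply]
        by_cases h : r = k
        · subst h
          rw [if_pos rfl]
          exact hφ1 (col x r)
        · rw [if_neg h]
          exact hφ0 _ _ (fun hc => h (hcolinj x hc).symm)
      rw [hone, Matrix.det_one]
    · rw [if_neg hxy]
      obtain ⟨r, hr⟩ := hwitness x y hxy
      exact Matrix.det_eq_zero_of_row_eq_zero r (fun k => hφ0 _ _ (hr k))
  have hgenli : LinearIndependent E gen := by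
    rw [Fintype.linearIndependent_iff]
    intro g hg x
    have h := congrArg (Φ x) hg
    rw [map_sum, map_zero] at h
    simp_rw [map_smul, hΦ, smul_eq_mul, mul_ite, mul_one, mul_zero] at h
    rwa [Finset.sum_ite_eq Finset.univ x g, if_pos (Finset.mem_univ x)] at h
  -- span computations
  set sF : Set (ExteriorAlgebra E D) := Set.range (ExteriorAlgebra.ι E ∘ f) with hsF
  set sC : Set (ExteriorAlgebra E D) := Set.range (ExteriorAlgebra.ι E ∘ c) with hsC
  have hmapF : Submodule.map (ExteriorAlgebra.ι E) F = Submodule.span E sF := by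
    rw [← hfspan, Submodule.map_span, hsF, Set.range_comp]
  have hmapC : Submodule.map (ExteriorAlgebra.ι E) C = Submodule.span E sC := by
    rw [← hcspan, Submodule.map_span, hsC, Set.range_comp]
  have hmapG : Submodule.map (ExteriorAlgebra.ι E) G =
      Submodule.span E sF ⊔ Submodule.span E sC := by
    rw [← hsup, Submodule.map_sup, hmapF, hmapC]
  have claimA : Submodule.span E (sF ^ (a' + 1)) = Submodule.span E {gen none} := by
    apply le_antisymm
    · rw [Submodule.span_le]
      rintro z hz
      obtain ⟨fn, hfn⟩ := Set.mem_pow.mp hz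
      choose idx hidx using fun i => (fn i).2
      have hz2 : z = ExteriorAlgebra.ιMulti E (a' + 1) (f ∘ idx) := by
        rw [← hfn, ExteriorAlgebra.ιMulti_apply,
          show (fun i => ((fn i : ExteriorAlgebra E D))) =
            fun i => ExteriorAlgebra.ι E ((f ∘ idx) i) from funext fun i => (hidx i).symm]
      by_cases hinj : Function.Injective idx
      · have hsurj : Function.Surjective idx := Finite.surjective_of_injective hinj
        have hrange : Set.range (f ∘ idx) = Set.range (v ∘ col none) := by
          rw [hcol_none, Set.range_comp, hsurj.range_eq, Set.image_univ]
        rw [hz2]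
        exact st4_wedge_mem_span_singleton (hfinj.comp hinj)
          (by rw [hcol_none]; exact hfinj) hrange
      · rw [hz2, AlternatingMap.map_eq_zero_of_not_injective _ _
          (fun hc => hinj (Function.Injective.of_comp hc))]
        exact Submodule.zero_mem _
    · rw [Submodule.span_le, Set.singleton_subset_iff]
      apply Submodule.subset_span
      rw [Set.mem_pow]
      refine ⟨fun i => ⟨(ExteriorAlgebra.ι E ∘ f) i, Set.mem_range_self i⟩, ?_⟩
      show (List.ofFn fun i => ExteriorAlgebra.ι E (f i)).prod =
        ExteriorAlgebra.ιMulti E (a' + 1) (v ∘ col none)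
      rw [hcol_none, ExteriorAlgebra.ιMulti_apply]
  have claimB : Submodule.span E (sF ^ a' * sC) =
      Submodule.span E (Set.range fun p : Fin (a' + 1) × Fin m => gen (some p)) := by
    apply le_antisymm
    · rw [Submodule.span_le]
      rintro z hz
      obtain ⟨x, hx, y, hy, rfl⟩ := Set.mem_mul.mp hz
      obtain ⟨fn, hfn⟩ := Set.mem_pow.mp hx
      choose idx hidx using fun i => (fn i).2
      obtain ⟨j, rfl⟩ := hy
      have hz2 : x * (ExteriorAlgebra.ι E ∘ c) j =
          ExteriorAlgebra.ιMulti E (a' + 1) (Fin.snoc (f ∘ idx) (c j)) := by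
        rw [st4_prod_snoc, ← hfn,
          show (fun i => ((fn i : ExteriorAlgebra E D))) =
            fun i => ExteriorAlgebra.ι E ((f ∘ idx) i) from funext fun i => (hidx i).symm]
        rfl
      by_cases hinj : Function.Injective idx
      · have hcard : (Finset.image idx Finset.univ)ᶜ.card = 1 := by
          rw [Finset.card_compl, Finset.card_image_of_injective _ hinj]
          simp
        obtain ⟨i, hi⟩ := Finset.card_eq_one.mp hcard
        have hrangeidx : Set.range idx = {i}ᶜ := by
          ext t
          have h1 : t ∈ Set.range idx ↔ t ∈ Finset.image idx Finset.univ := by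
            simp [Finset.mem_image]
          rw [h1, ← Finset.mem_compl.not_left, hi]
          simp
        have h1 : Function.Injective (Fin.snoc (f ∘ idx) (c j) : Fin (a' + 1) → D) :=
          st4_snoc_injective (hfinj.comp hinj) (by rintro ⟨t, ht⟩; exact hcf j ⟨idx t, ht⟩)
        have h2 : Function.Injective (v ∘ col (some (i, j))) := by
          rw [hcol_some]
          exact st4_snoc_injective (hfinj.comp Fin.succAbove_right_injective)
            (by rintro ⟨t, ht⟩; exact hcf j ⟨_, ht⟩)
        have h3 : Set.range (Fin.snoc (f ∘ idx) (c j) : Fin (a' + 1) → D) =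
            Set.range (v ∘ col (some (i, j))) := by
          have h4 : Set.range idx = Set.range (i.succAbove) := by
            rw [hrangeidx, Fin.range_succAbove]
          have e1 : Set.range (Fin.snoc (f ∘ idx) (c j) : Fin (a' + 1) → D) =
              f '' Set.range idx ∪ {c j} := by
            rw [st4_range_snoc, Set.range_comp f idx]
          have e2 : Set.range (v ∘ col (some (i, j))) =
              f '' Set.range (i.succAbove) ∪ {c j} := by
            rw [hcol_some i j, st4_range_snoc, Set.range_comp f i.succAbove]
          rw [e1, e2, h4]
        have hmem := st4_wedge_mem_span_singleton (E := E) h1 h2 h3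
        rw [hz2]
        refine Submodule.span_mono ?_ hmem
        rw [Set.singleton_subset_iff]
        exact ⟨(i, j), rfl⟩
      · rw [hz2, AlternatingMap.map_eq_zero_of_not_injective]
        · exact Submodule.zero_mem _
        · intro hc
          apply hinj
          refine Function.Injective.of_comp (f := f) (fun s t hst => ?_)
          have := hc (a₁ := Fin.castSucc s) (a₂ := Fin.castSucc t)
            (by rw [Fin.snoc_castSucc, Fin.snoc_castSucc]; exact hst)
          exact Fin.castSucc_injective _ this
    · rw [Submodule.span_le]
      rintro z ⟨⟨i, j⟩, rfl⟩
      have hz : gen (some (i, j)) =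
          (List.ofFn fun k => ExteriorAlgebra.ι E (f (i.succAbove k))).prod *
            ExteriorAlgebra.ι E (c j) := by
        show ExteriorAlgebra.ιMulti E _ (v ∘ col (some (i, j))) = _
        rw [hcol_some, st4_prod_snoc]
        rfl
      show gen (some (i, j)) ∈ _
      rw [hz]
      apply Submodule.subset_span
      refine Set.mul_mem_mul (Set.mem_pow.mpr ?_) ⟨j, rfl⟩
      exact ⟨fun k => ⟨(ExteriorAlgebra.ι E ∘ f) (i.succAbove k), Set.mem_range_self _⟩, rfl⟩
  have hrangegen : ({gen none} ∪ Set.range fun p : Fin (a' + 1) × Fin m => gen (some p)) =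
      Set.range gen := by
    ext z
    simp only [Set.mem_union, Set.mem_singleton_iff, Set.mem_range]
    constructor
    · rintro (rfl | ⟨p, rfl⟩)
      exacts [⟨none, rfl⟩, ⟨some p, rfl⟩]
    · rintro ⟨(_ | p), rfl⟩
      · left; rfl
      · right; exact ⟨p, rfl⟩
  have hP : (Submodule.map (ExteriorAlgebra.ι E) F) ^ a' *
      (Submodule.map (ExteriorAlgebra.ι E) G) = Submodule.span E (Set.range gen) := by
    rw [hmapF, hmapG, Submodule.mul_sup, ← pow_succ, Submodule.span_pow,
      Submodule.span_pow, Submodule.span_mul_span, claimA, claimB, ← Submodule.span_union,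
      hrangegen]
  have hfinal : Module.finrank E
      ((Submodule.map (ExteriorAlgebra.ι E) F) ^ (a' + 1 - 1) *
        (Submodule.map (ExteriorAlgebra.ι E) G)) = 1 + (a' + 1) * m := by
    have : a' + 1 - 1 = a' := rfl
    rw [this, hP, finrank_span_eq_card hgenli, Fintype.card_option, Fintype.card_prod,
      Fintype.card_fin, Fintype.card_fin, add_comm]
  rw [hfinal, hg, Nat.add_sub_cancel_left]
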